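/- Let π : ℝ × (0,∞) → ℝ be continuous with π(μ,σ) > 0 for all μ ∈ ℝ, σ > 0, and suppose there exists k : (0,∞) × ℝ → ℝ such that π(a·μ + b, a·σ) = (k(a,b)/a²)·π(μ,σ) for all a > 0, b ∈ ℝ, μ ∈ ℝ, σ > 0. Then there exist constants c > 0 and r ∈ ℝ such that π(μ,σ) = c·σ^{−r} for all μ ∈ ℝ, σ > 0. -/

import Mathlib

/-- The functional equation `π (a*μ+b) (a*σ) = (k a b / a^2) * π μ σ` for a positive
continuous joint consistency factor on `ℝ × (0,∞)` forces `π μ σ = c * σ ^ (-r)`: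
the solution is independent of `μ` and a pure power of `σ`. -/
theorem location_scale_consistency_factor_is_power
    (π : ℝ → ℝ → ℝ)
    (hc : ContinuousOn (fun q : ℝ × ℝ => π q.1 q.2) (Set.univ ×ˢ Set.Ioi 0))
    (hpos : ∀ μ σ, 0 < σ → 0 < π μ σ)
    (k : ℝ → ℝ → ℝ)
    (hk : ∀ a b μ σ, 0 < a → 0 < σ →
      π (a * μ + b) (a * σ) = (k a b / a ^ 2) * π μ σ) :
    ∃ (c r : ℝ), 0 < c ∧ ∀ μ σ, 0 < σ → π μ σ = c * σ ^ (-r) := by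
  have hopen : IsOpen ((Set.univ : Set ℝ) ×ˢ Set.Ioi (0 : ℝ)) :=
    isOpen_univ.prod isOpen_Ioi
  have hca : ∀ μ σ : ℝ, 0 < σ → ContinuousAt (fun q : ℝ × ℝ => π q.1 q.2) (μ, σ) := by
    intro μ σ hσ
    exact hc.continuousAt (hopen.mem_nhds (by simp [hσ]))
  -- translation equation
  have hk1 : ∀ b μ σ : ℝ, 0 < σ → π (μ + b) σ = k 1 b * π μ σ := by
    intro b μ σ hσ
    have := hk 1 b μ σ one_pos hσ
    simpa using this
  -- scaling relation for π 0
  have hscale : ∀ a σ : ℝ, 0 < a → 0 < σ → π 0 (a * σ) = (k a 0 / a ^ 2) * π 0 σ := by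
    intro a σ ha hσ
    have := hk a 0 0 σ ha hσ
    simpa using this
  have hka0 : ∀ a : ℝ, 0 < a → 0 < k a 0 / a ^ 2 := by
    intro a ha
    have h1 := hscale a 1 ha one_pos
    have h2 : 0 < π 0 (a * 1) := hpos 0 (a * 1) (by simpa using ha)
    have h3 : 0 < π 0 1 := hpos 0 1 one_pos
    nlinarith
  have hπ01 : 0 < π 0 1 := hpos 0 1 one_pos
  -- k 1 b = k 1 (b / a) for a > 0
  have hkdiv : ∀ a b : ℝ, 0 < a → k 1 b = k 1 (b / a) := by
    intro a b ha
    -- route (i): π b a = k 1 b * π 0 a = k 1 b * (k a 0 / a^2) * π 0 1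
    have r1 : π b a = k 1 b * ((k a 0 / a ^ 2) * π 0 1) := by
      have e1 : π (0 + b) a = k 1 b * π 0 a := hk1 b 0 a ha
      have e2 : π 0 (a * 1) = (k a 0 / a ^ 2) * π 0 1 := hscale a 1 ha one_pos
      simp only [zero_add] at e1
      rw [e1]
      rw [mul_one] at e2
      rw [e2]
    -- route (ii): π b a = (k a 0 / a^2) * π (b/a) 1 = (k a 0/a^2) * k 1 (b/a) * π 0 1
    have r2 : π b a = (k a 0 / a ^ 2) * (k 1 (b / a) * π 0 1) := by
      have e1 := hk a 0 (b / a) 1 ha one_pos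
      have e2 : π (0 + b / a) 1 = k 1 (b / a) * π 0 1 := hk1 (b / a) 0 1 one_pos
      simp only [zero_add] at e2
      rw [mul_div_cancel₀ _ (ne_of_gt ha), add_zero, mul_one, e2] at e1
      exact e1
    have hpos' := hka0 a ha
    have heq := r1.symm.trans r2
    have h3 : (k a 0 / a ^ 2) * π 0 1 * k 1 b = (k a 0 / a ^ 2) * π 0 1 * k 1 (b / a) := by
      ring_nf; ring_nf at heq; linarith
    exact mul_left_cancel₀ (ne_of_gt (mul_pos hpos' hπ01)) h3
  -- π b 1 = k 1 b * π 0 1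
  have hπb1 : ∀ b : ℝ, π b 1 = k 1 b * π 0 1 := by
    intro b
    have := hk1 b 0 1 one_pos
    simpa using this
  -- π b 1 = π (b / a) 1 for a > 0
  have hπdiv : ∀ a b : ℝ, 0 < a → π b 1 = π (b / a) 1 := by
    intro a b ha
    rw [hπb1 b, hπb1 (b / a), hkdiv a b ha]
  -- by continuity, π b 1 = π 0 1
  have hconst : ∀ b : ℝ, π b 1 = π 0 1 := by
    intro b
    have hlim : Filter.Tendsto (fun n : ℕ => (b / (n : ℝ), (1 : ℝ))) Filter.atTop
        (nhds ((0 : ℝ), (1 : ℝ))) := by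
      refine Filter.Tendsto.prodMk_nhds ?_ tendsto_const_nhds
      exact tendsto_const_div_atTop_nhds_zero_nat b
    have hcomp : Filter.Tendsto (fun n : ℕ => π (b / (n : ℝ)) 1) Filter.atTop
        (nhds (π 0 1)) := (hca 0 1 one_pos).tendsto.comp hlim
    have hev : ∀ᶠ n : ℕ in Filter.atTop, π (b / (n : ℝ)) 1 = π b 1 := by
      filter_upwards [Filter.eventually_ge_atTop 1] with n hn
      exact (hπdiv (n : ℝ) b (by exact_mod_cast Nat.pos_of_ne_zero (by omega))).symm
    have : Filter.Tendsto (fun _ : ℕ => π b 1) Filter.atTop (nhds (π 0 1)) :=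
      hcomp.congr' (by filter_upwards [hev] with n h using h)
    exact tendsto_nhds_unique tendsto_const_nhds this
  -- hence k 1 b = 1
  have hk1b : ∀ b : ℝ, k 1 b = 1 := by
    intro b
    have h := (hπb1 b).symm.trans (hconst b)
    have h2 : k 1 b * π 0 1 = 1 * π 0 1 := by linarith
    exact mul_right_cancel₀ (ne_of_gt hπ01) h2
  -- π is independent of μ
  have hμ : ∀ μ σ : ℝ, 0 < σ → π μ σ = π 0 σ := by
    intro μ σ hσ
    have := hk1 μ 0 σ hσ
    rw [hk1b] at this
    simpa using this
  -- multiplicative Cauchy equation for F a := π 0 a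
  set F : ℝ → ℝ := fun a => π 0 a with hF
  have hFpos : ∀ a : ℝ, 0 < a → 0 < F a := fun a ha => hpos 0 a ha
  have hFmul : ∀ a σ : ℝ, 0 < a → 0 < σ → F (a * σ) * F 1 = F a * F σ := by
    intro a σ ha hσ
    have h1 := hscale a σ ha hσ
    have h2 := hscale a 1 ha one_pos
    rw [mul_one] at h2
    rw [hF]
    simp only
    rw [h1, h2]
    ring
  -- additive function G
  set G : ℝ → ℝ := fun t => Real.log (F (Real.exp t)) - Real.log (F 1) with hG
  have hGadd : ∀ t u : ℝ, G (t + u) = G t + G u := by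
    intro t u
    have h1 : F (Real.exp t * Real.exp u) * F 1 = F (Real.exp t) * F (Real.exp u) :=
      hFmul _ _ (Real.exp_pos t) (Real.exp_pos u)
    have ht := hFpos _ (Real.exp_pos t)
    have hu := hFpos _ (Real.exp_pos u)
    have h1' := hFpos 1 one_pos
    have htu := hFpos _ (mul_pos (Real.exp_pos t) (Real.exp_pos u))
    have hlog : Real.log (F (Real.exp t * Real.exp u)) + Real.log (F 1)
        = Real.log (F (Real.exp t)) + Real.log (F (Real.exp u)) := by
      rw [← Real.log_mul (ne_of_gt htu) (ne_of_gt h1'),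
        ← Real.log_mul (ne_of_gt ht) (ne_of_gt hu), h1]
    rw [hG]
    simp only
    rw [Real.exp_add]
    linarith
  have hGcont : Continuous G := by
    have hFc : Continuous fun t : ℝ => F (Real.exp t) := by
      rw [continuous_iff_continuousAt]
      intro t
      have h1 : ContinuousAt (fun q : ℝ × ℝ => π q.1 q.2) (0, Real.exp t) :=
        hca 0 (Real.exp t) (Real.exp_pos t)
      have h2 : ContinuousAt (fun t : ℝ => (((0 : ℝ), Real.exp t) : ℝ × ℝ)) t :=
        (continuous_const.prodMk Real.continuous_exp).continuousAt
      have h3 : ContinuousAt ((fun q : ℝ × ℝ => π q.1 q.2) ∘ fun t : ℝ => (((0 : ℝ), Real.exp t) : ℝ × ℝ)) t :=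
        ContinuousAt.comp h1 h2
      exact h3
    have hlogc : Continuous fun t : ℝ => Real.log (F (Real.exp t)) := by
      rw [continuous_iff_continuousAt]
      intro t
      have h2 : ContinuousAt (fun t : ℝ => F (Real.exp t)) t := hFc.continuousAt
      have h3 : ContinuousAt (Real.log ∘ fun t : ℝ => F (Real.exp t)) t :=
        ContinuousAt.comp (Real.continuousAt_log (ne_of_gt (hFpos _ (Real.exp_pos t)))) h2
      exact h3
    exact hlogc.sub continuous_const
  -- G is linear
  set Gh : ℝ →+ ℝ := AddMonoidHom.mk' G hGadd with hGh
  have hGlin : ∀ t : ℝ, G t = t * G 1 := by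
    intro t
    have := (Gh.toRealLinearMap hGcont).map_smul t 1
    simp only [smul_eq_mul, mul_one] at this
    have hc1 : (Gh.toRealLinearMap hGcont) t = G t := by
      rfl
    have hc2 : (Gh.toRealLinearMap hGcont) 1 = G 1 := by
      rfl
    rw [hc1, hc2] at this
    linarith [this]
  refine ⟨F 1, -(G 1), hFpos 1 one_pos, ?_⟩
  intro μ σ hσ
  rw [hμ μ σ hσ, neg_neg]
  have hFσ := hFpos σ hσ
  have hF1 := hFpos 1 one_pos
  have h2 : G (Real.log σ) = Real.log (F σ) - Real.log (F 1) := by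
    simp only [hG]
    rw [Real.exp_log hσ]
  have h3 := hGlin (Real.log σ)
  have key : Real.log (F σ) = Real.log (F 1) + Real.log σ * G 1 := by
    rw [h2] at h3; linarith
  rw [Real.rpow_def_of_pos hσ]
  calc F σ = Real.exp (Real.log (F σ)) := (Real.exp_log hFσ).symm
    _ = Real.exp (Real.log (F 1) + Real.log σ * G 1) := by rw [key]
    _ = Real.exp (Real.log (F 1)) * Real.exp (Real.log σ * G 1) := Real.exp_add _ _
    _ = F 1 * Real.exp (Real.log σ * G 1) := by rw [Real.exp_log hF1]
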